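/- Let p > 1 and let z_1, …, z_n be non-negative real numbers. Then (∑_{j=1}^n z_j)^p − ∑_{j=1}^n z_j^p ≥ c(p,n) (∑_{j=1}^n z_j)^{p−1} · min_i ∑_{j≠i} z_j, for some constant c(p,n) > 0 depending only on p and n. -/

import Mathlib

open Finset

lemma aux1 (p a b : ℝ) (hp : 1 < p) (ha : 0 ≤ a) (hb : 0 ≤ b) :
    a ^ p + p * a ^ (p - 1) * b ≤ (a + b) ^ p := by
  rcases ha.eq_or_lt with h | h
  · rw [← h, Real.zero_rpow (by linarith), Real.zero_rpow (by linarith)]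
    simpa using Real.rpow_nonneg hb p
  · have hba : -1 ≤ b / a := le_trans (by norm_num) (div_nonneg hb h.le)
    have key := one_add_mul_self_le_rpow_one_add hba hp.le
    have hap : (0:ℝ) < a ^ p := Real.rpow_pos_of_pos h p
    calc a ^ p + p * a ^ (p - 1) * b = a ^ p * (1 + p * (b / a)) := by
          rw [Real.rpow_sub h, Real.rpow_one]
          field_simp
      _ ≤ a ^ p * (1 + b / a) ^ p := mul_le_mul_of_nonneg_left key hap.le
      _ = (a + b) ^ p := by
          rw [← Real.mul_rpow h.le (by positivity)]
          congr 1
          field_simp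

theorem stmt1 (p : ℝ) (hp : 1 < p) (n : ℕ) (hn : 1 ≤ n) :
    ∃ c : ℝ, 0 < c ∧ ∀ z : Fin n → ℝ, (∀ j, 0 ≤ z j) →
      c * (∑ j, z j) ^ (p - 1) * (⨅ i : Fin n, ∑ j ∈ Finset.univ.erase i, z j)
        ≤ (∑ j, z j) ^ p - ∑ j, (z j) ^ p := by
  have hn0 : (0:ℝ) < n := by exact_mod_cast hn
  refine ⟨(p - 1) / (n : ℝ) ^ (p - 1),
    div_pos (by linarith) (Real.rpow_pos_of_pos hn0 _), fun z hz => ?_⟩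
  haveI : Nonempty (Fin n) := Fin.pos_iff_nonempty.mp hn
  obtain ⟨m, hm⟩ := Finite.exists_max z
  set a := z m with ha_def
  set b := ∑ j ∈ Finset.univ.erase m, z j with hb_def
  have ha : 0 ≤ a := hz m
  have hb : 0 ≤ b := Finset.sum_nonneg fun j _ => hz j
  have hS : ∑ j, z j = a + b := by
    rw [hb_def, ha_def, ← Finset.add_sum_erase _ z (Finset.mem_univ m)]
  set M := ⨅ i : Fin n, ∑ j ∈ Finset.univ.erase i, z j with hM_def
  have hM0 : 0 ≤ M := le_ciInf fun i => Finset.sum_nonneg fun j _ => hz j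
  have hMb : M ≤ b := ciInf_le (Set.Finite.bddBelow (Set.finite_range _)) m
  -- sum of powers bound
  have hsum : ∑ j, (z j) ^ p ≤ a ^ p + a ^ (p - 1) * b := by
    rw [← Finset.add_sum_erase _ (fun j => (z j) ^ p) (Finset.mem_univ m), hb_def,
      Finset.mul_sum]
    refine add_le_add le_rfl (Finset.sum_le_sum fun j hj => ?_)
    have : (z j) ^ p = (z j) ^ (p-1) * z j := by
      rw [show p = (p-1)+1 by ring, Real.rpow_add' (hz j) (by ring_nf; linarith),
        Real.rpow_one]; ring_nf
    rw [this]
    exact mul_le_mul_of_nonneg_right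
      (Real.rpow_le_rpow (hz j) (hm j) (by linarith)) (hz j)
  have hkey : (p - 1) * a ^ (p - 1) * b ≤ (∑ j, z j) ^ p - ∑ j, (z j) ^ p := by
    have := aux1 p a b hp ha hb
    rw [hS]
    nlinarith [this, hsum]
  have hSa : ∑ j, z j ≤ n * a := by
    calc ∑ j, z j ≤ ∑ _j : Fin n, a := Finset.sum_le_sum fun j _ => hm j
      _ = n * a := by simp [mul_comm]
  have hSp : (∑ j, z j) ^ (p - 1) ≤ (n:ℝ) ^ (p - 1) * a ^ (p - 1) := by
    calc (∑ j, z j) ^ (p - 1) ≤ ((n:ℝ) * a) ^ (p - 1) :=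
          Real.rpow_le_rpow (Finset.sum_nonneg fun j _ => hz j) hSa (by linarith)
      _ = (n:ℝ) ^ (p - 1) * a ^ (p - 1) := Real.mul_rpow hn0.le ha
  have hc : (p - 1) / (n : ℝ) ^ (p - 1) * (∑ j, z j) ^ (p - 1) ≤ (p - 1) * a ^ (p - 1) := by
    rw [div_mul_eq_mul_div, div_le_iff₀ (Real.rpow_pos_of_pos hn0 _)]
    calc (p - 1) * (∑ j, z j) ^ (p - 1) ≤ (p - 1) * ((n:ℝ) ^ (p - 1) * a ^ (p - 1)) := by
          gcongr
      _ = (p - 1) * a ^ (p - 1) * (n:ℝ) ^ (p - 1) := by ring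
  calc (p - 1) / (n : ℝ) ^ (p - 1) * (∑ j, z j) ^ (p - 1) * M
      ≤ (p - 1) * a ^ (p - 1) * M := mul_le_mul_of_nonneg_right hc hM0
    _ ≤ (p - 1) * a ^ (p - 1) * b := by
        exact mul_le_mul_of_nonneg_left hMb
          (mul_nonneg (by linarith) (Real.rpow_nonneg ha _))
    _ ≤ _ := hkey
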